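/- arXiv:2206.12116 — 2 statements merged into one kernel-verified Lean document; each statement's English description precedes it below -/
import Mathlib

section
/- The closed-form tree quantity Σ_e w_e |μ(Γ(v_e)) − ν(Γ(v_e))| equals the optimal transport cost between μ and ν with the tree shortest-path metric d_T as ground cost: W_T(μ, ν) = min over couplings Π of Σᵢⱼ πᵢⱼ d_T(xᵢ, xⱼ). -/
/-- A finite rooted tree on `Fin N`, given by a parent function, with a nonnegative
weight on the edge connecting each node to its parent. -/
structure WTree (N : ℕ) where
  parent : Fin N → Fin N
  root : Fin N
  w : Fin N → ℝ
  hw : ∀ k, 0 ≤ w k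
  parent_root : parent root = root
  depth : Fin N → ℕ
  depth_root : depth root = 0
  depth_parent : ∀ v, v ≠ root → depth v = depth (parent v) + 1
  root_unique : ∀ v, depth v = 0 → v = root

/-- `T.anc i k` : node `k` is an ancestor of node `i` (including `i` itself). -/
def WTree.anc {N : ℕ} (T : WTree N) (i k : Fin N) : Prop :=
  ∃ m : ℕ, T.parent^[m] i = k

/-- A leaf is a node with no children. -/
def WTree.IsLeaf {N : ℕ} (T : WTree N) (i : Fin N) : Prop :=
  ∀ v, T.parent v = i → v = i

open Classical in
/-- The 0/1 ancestor-indicator vector `bᵢ` of node `i`. -/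
noncomputable def WTree.bvec {N : ℕ} (T : WTree N) (i : Fin N) : Fin N → ℝ :=
  fun k => if T.anc i k then 1 else 0

open Classical in
/-- The (unique-path) shortest-path distance on the weighted tree: the sum of the
weights of the edges on the path between `i` and `j`, i.e. the sum of weights over
the symmetric difference of the ancestor sets. -/
noncomputable def WTree.dist {N : ℕ} (T : WTree N) (i j : Fin N) : ℝ :=
  ∑ k, if (T.anc i k ∧ ¬ T.anc j k) ∨ (T.anc j k ∧ ¬ T.anc i k) then T.w k else 0
/-- `π` is a coupling of the mass vectors `a` and `b`. -/
def IsCoupling {n m : ℕ} (π : Fin n → Fin m → ℝ) (a : Fin n → ℝ) (b : Fin m → ℝ) : Prop :=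
  (∀ i j, 0 ≤ π i j) ∧ (∀ i, ∑ j, π i j = a i) ∧ (∀ j, ∑ i, π i j = b j)

/-- Transport cost of a plan `π` with respect to the cost `c`. -/
noncomputable def otCost {n m : ℕ} (π : Fin n → Fin m → ℝ) (c : Fin n → Fin m → ℝ) : ℝ :=
  ∑ i, ∑ j, π i j * c i j

/-- `a` is a probability vector. -/
def IsProbVec {n : ℕ} (a : Fin n → ℝ) : Prop :=
  (∀ i, 0 ≤ a i) ∧ ∑ i, a i = 1

open Classical in
/-- `μ(Γ(v_k))`: total mass of the subtree rooted at node `k`. -/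
noncomputable def WTree.mass {N L : ℕ} (T : WTree N) (ℓ : Fin L → Fin N)
    (a : Fin L → ℝ) (k : Fin N) : ℝ :=
  ∑ i, if T.anc (ℓ i) k then a i else 0

namespace WTree
variable {N : ℕ} (T : WTree N)

lemma anc_refl (i : Fin N) : T.anc i i := ⟨0, rfl⟩

lemma anc_trans {i k v : Fin N} (h1 : T.anc i k) (h2 : T.anc k v) : T.anc i v := by
  obtain ⟨m, rfl⟩ := h1; obtain ⟨m', rfl⟩ := h2
  exact ⟨m' + m, (Function.iterate_add_apply _ _ _ _)⟩

lemma depth_parent_le (x : Fin N) : T.depth (T.parent x) ≤ T.depth x := by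
  by_cases h : x = T.root
  · subst h; rw [T.parent_root]
  · rw [T.depth_parent x h]; omega

lemma depth_iter_le (t : ℕ) (x : Fin N) : T.depth (T.parent^[t] x) ≤ T.depth x := by
  induction t with
  | zero => simp
  | succ n ih =>
    rw [Function.iterate_succ_apply']
    exact le_trans (T.depth_parent_le _) ih

lemma iter_eq_of_depth_le {t : ℕ} {x : Fin N}
    (h : T.depth x ≤ T.depth (T.parent^[t] x)) : T.parent^[t] x = x := by
  induction t with
  | zero => rfl
  | succ n ih =>
    by_cases hr : x = T.root
    · subst hr; exact Function.iterate_fixed T.parent_root _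
    · exfalso
      have h1 : T.depth (T.parent x) + 1 = T.depth x := (T.depth_parent x hr).symm
      have h2 : T.depth (T.parent^[n+1] x) ≤ T.depth (T.parent x) := by
        rw [Function.iterate_succ_apply]; exact T.depth_iter_le n _
      omega

lemma anc_antisymm' {k v : Fin N} (h : T.anc k v) (hd : T.depth k ≤ T.depth v) : v = k := by
  obtain ⟨t, rfl⟩ := h
  exact T.iter_eq_of_depth_le hd

lemma anc_total {i k v : Fin N} (h1 : T.anc i k) (h2 : T.anc i v) :
    T.anc k v ∨ T.anc v k := by
  obtain ⟨m, rfl⟩ := h1; obtain ⟨m', rfl⟩ := h2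
  rcases le_total m m' with h | h
  · left; exact ⟨m' - m, by rw [← Function.iterate_add_apply, Nat.sub_add_cancel h]⟩
  · right; exact ⟨m - m', by rw [← Function.iterate_add_apply, Nat.sub_add_cancel h]⟩

lemma anc_of_depth_le {i k v : Fin N} (h1 : T.anc i k) (h2 : T.anc i v)
    (hd : T.depth k ≤ T.depth v) : T.anc v k := by
  rcases T.anc_total h1 h2 with h | h
  · have := T.anc_antisymm' h hd
    subst this; exact T.anc_refl _
  · exact h

lemma anc_root (i : Fin N) : T.anc i T.root := by
  suffices h : ∀ n (i : Fin N), T.depth i = n → T.parent^[n] i = T.root by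
    exact ⟨T.depth i, h _ i rfl⟩
  intro n
  induction n with
  | zero => intro i hi; exact T.root_unique i hi
  | succ n ih =>
    intro i hi
    have hr : i ≠ T.root := by intro h; rw [h, T.depth_root] at hi; omega
    have := T.depth_parent i hr
    rw [Function.iterate_succ_apply]
    exact ih _ (by omega)

end WTree

open Classical

lemma cost_lower {N L : ℕ} (T : WTree N) (ℓ : Fin L → Fin N) (a b : Fin L → ℝ)
    (π : Fin L → Fin L → ℝ) (h : IsCoupling π a b) :
    ∑ k, T.w k * |T.mass ℓ a k - T.mass ℓ b k|
      ≤ otCost π (fun i j => T.dist (ℓ i) (ℓ j)) := by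
  obtain ⟨hpos, hrow, hcol⟩ := h
  have hcost : otCost π (fun i j => T.dist (ℓ i) (ℓ j))
      = ∑ k, ∑ p, ∑ q, π p q *
        (if (T.anc (ℓ p) k ∧ ¬ T.anc (ℓ q) k) ∨ (T.anc (ℓ q) k ∧ ¬ T.anc (ℓ p) k)
          then T.w k else 0) := by
    unfold otCost WTree.dist
    simp_rw [Finset.mul_sum]
    calc ∑ p : Fin L, ∑ q : Fin L, ∑ k : Fin N, π p q *
          (if (T.anc (ℓ p) k ∧ ¬ T.anc (ℓ q) k) ∨ (T.anc (ℓ q) k ∧ ¬ T.anc (ℓ p) k)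
            then T.w k else 0)
        = ∑ p : Fin L, ∑ k : Fin N, ∑ q : Fin L, π p q *
          (if (T.anc (ℓ p) k ∧ ¬ T.anc (ℓ q) k) ∨ (T.anc (ℓ q) k ∧ ¬ T.anc (ℓ p) k)
            then T.w k else 0) :=
          Finset.sum_congr rfl (fun p _ => Finset.sum_comm)
      _ = _ := Finset.sum_comm
  rw [hcost]
  apply Finset.sum_le_sum
  intro k _
  set χ : Fin L → ℝ := fun p => if T.anc (ℓ p) k then 1 else 0 with hχ
  have he : ∀ p q : Fin L,
      (if (T.anc (ℓ p) k ∧ ¬ T.anc (ℓ q) k) ∨ (T.anc (ℓ q) k ∧ ¬ T.anc (ℓ p) k)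
        then T.w k else 0) = T.w k * |χ p - χ q| := by
    intro p q
    simp only [hχ]
    by_cases h1 : T.anc (ℓ p) k <;> by_cases h2 : T.anc (ℓ q) k <;>
      simp [h1, h2]
  have hmass : ∑ p, ∑ q, π p q * (χ p - χ q) = T.mass ℓ a k - T.mass ℓ b k := by
    have h1 : ∑ p, ∑ q, π p q * χ p = T.mass ℓ a k := by
      unfold WTree.mass
      apply Finset.sum_congr rfl
      intro p _
      rw [← Finset.sum_mul, hrow p]
      simp only [hχ]
      by_cases hp : T.anc (ℓ p) k <;> simp [hp]
    have h2 : ∑ p, ∑ q, π p q * χ q = T.mass ℓ b k := by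
      rw [Finset.sum_comm]
      unfold WTree.mass
      apply Finset.sum_congr rfl
      intro q _
      rw [← Finset.sum_mul, hcol q]
      simp only [hχ]
      by_cases hq : T.anc (ℓ q) k <;> simp [hq]
    calc ∑ p, ∑ q, π p q * (χ p - χ q)
        = ∑ p, ∑ q, (π p q * χ p - π p q * χ q) := by
          simp [mul_sub]
      _ = (∑ p, ∑ q, π p q * χ p) - ∑ p, ∑ q, π p q * χ q := by
          rw [← Finset.sum_sub_distrib]
          apply Finset.sum_congr rfl
          intro p _
          rw [Finset.sum_sub_distrib]
      _ = T.mass ℓ a k - T.mass ℓ b k := by rw [h1, h2]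
  calc T.w k * |T.mass ℓ a k - T.mass ℓ b k|
      = T.w k * |∑ p, ∑ q, π p q * (χ p - χ q)| := by rw [hmass]
    _ ≤ T.w k * ∑ p, ∑ q, |π p q * (χ p - χ q)| := by
        apply mul_le_mul_of_nonneg_left _ (T.hw k)
        calc |∑ p, ∑ q, π p q * (χ p - χ q)| ≤ ∑ p, |∑ q, π p q * (χ p - χ q)| :=
              Finset.abs_sum_le_sum_abs _ _
          _ ≤ ∑ p, ∑ q, |π p q * (χ p - χ q)| := by
              apply Finset.sum_le_sum
              intro p _
              exact Finset.abs_sum_le_sum_abs _ _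
    _ = ∑ p, ∑ q, π p q * (if (T.anc (ℓ p) k ∧ ¬ T.anc (ℓ q) k) ∨ (T.anc (ℓ q) k ∧ ¬ T.anc (ℓ p) k)
          then T.w k else 0) := by
        rw [Finset.mul_sum]
        apply Finset.sum_congr rfl
        intro p _
        rw [Finset.mul_sum]
        apply Finset.sum_congr rfl
        intro q _
        rw [he p q, abs_mul, abs_of_nonneg (hpos p q)]
        ring

lemma wdist_self {N : ℕ} (T : WTree N) (i : Fin N) : T.dist i i = 0 := by
  unfold WTree.dist
  apply Finset.sum_eq_zero
  intro k _
  simp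

lemma exists_good_coupling {N L : ℕ} (T : WTree N) (ℓ : Fin L → Fin N) :
    ∀ n : ℕ, ∀ a b : Fin L → ℝ, (∀ l, 0 ≤ a l) → (∀ l, 0 ≤ b l) →
      ∑ l, a l = ∑ l, b l →
      (Finset.univ.filter fun l => a l ≠ b l).card ≤ n →
      ∃ π, IsCoupling π a b ∧
        otCost π (fun p q => T.dist (ℓ p) (ℓ q)) ≤
          ∑ k, T.w k * |T.mass ℓ a k - T.mass ℓ b k| := by
  intro n
  induction n with
  | zero =>
    intro a b hha hhb _ hcard
    have hab : ∀ l, a l = b l := by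
      intro l
      by_contra h
      have : l ∈ Finset.univ.filter fun l => a l ≠ b l := by
        simp [h]
      have := Finset.card_pos.mpr ⟨l, this⟩
      omega
    refine ⟨fun p q => if p = q then a p else 0, ⟨?_, ?_, ?_⟩, ?_⟩
    · intro p q
      dsimp only
      split
      · exact hha p
      · exact le_rfl
    · intro p
      simp [Finset.sum_ite_eq]
    · intro q
      rw [Finset.sum_congr rfl (fun p _ => rfl)]
      rw [show (∑ p, if p = q then a p else 0) = a q from by
        simp [Finset.sum_ite_eq']]
      exact hab q
    · have h0 : otCost (fun p q => if p = q then a p else 0)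
          (fun p q => T.dist (ℓ p) (ℓ q)) = 0 := by
        unfold otCost
        apply Finset.sum_eq_zero
        intro p _
        apply Finset.sum_eq_zero
        intro q _
        by_cases h : p = q
        · subst h; simp [wdist_self]
        · simp [h]
      rw [h0]
      apply Finset.sum_nonneg
      intro k _
      exact mul_nonneg (T.hw k) (abs_nonneg _)
  | succ n ih =>
    intro a b hha hhb hsum hcard
    by_cases hc : (Finset.univ.filter fun l => a l ≠ b l).card ≤ n
    · exact ih a b hha hhb hsum hc
    -- there is a discrepancy
    have hsur : ∃ i, b i < a i := by
      by_contra h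
      push_neg at h
      have hall : ∀ l, a l = b l := by
        by_contra hne
        push_neg at hne
        obtain ⟨l, hl⟩ := hne
        have hlt : a l < b l := lt_of_le_of_ne (h l) hl
        have : ∑ l, a l < ∑ l, b l :=
          Finset.sum_lt_sum (fun i _ => h i) ⟨l, Finset.mem_univ l, hlt⟩
        linarith
      have : (Finset.univ.filter fun l => a l ≠ b l) = ∅ := by
        apply Finset.filter_eq_empty_iff.mpr
        intro l _
        simp [hall l]
      rw [this] at hc
      simp at hc
    have hdef : ∃ j, a j < b j := by
      by_contra h
      push_neg at h
      have hall : ∀ l, a l = b l := by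
        by_contra hne
        push_neg at hne
        obtain ⟨l, hl⟩ := hne
        have hlt : b l < a l := lt_of_le_of_ne (h l) (Ne.symm hl)
        have : ∑ l, b l < ∑ l, a l :=
          Finset.sum_lt_sum (fun i _ => h i) ⟨l, Finset.mem_univ l, hlt⟩
        linarith
      have : (Finset.univ.filter fun l => a l ≠ b l) = ∅ := by
        apply Finset.filter_eq_empty_iff.mpr
        intro l _
        simp [hall l]
      rw [this] at hc
      simp at hc
    classical
    -- the set of nodes whose subtree contains both surplus and deficit
    set V : Finset (Fin N) := Finset.univ.filter
      (fun u => (∃ i, T.anc (ℓ i) u ∧ b i < a i) ∧ (∃ j, T.anc (ℓ j) u ∧ a j < b j))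
      with hV
    have hrootV : T.root ∈ V := by
      obtain ⟨i0, hi0⟩ := hsur
      obtain ⟨j0, hj0⟩ := hdef
      simp only [hV, Finset.mem_filter, Finset.mem_univ, true_and]
      exact ⟨⟨i0, T.anc_root _, hi0⟩, ⟨j0, T.anc_root _, hj0⟩⟩
    obtain ⟨v, hvV, hvmax⟩ := V.exists_max_image T.depth ⟨T.root, hrootV⟩
    rw [hV, Finset.mem_filter] at hvV
    obtain ⟨-, ⟨i, hanci, hi⟩, ⟨j, hancj, hj⟩⟩ := hvV
    have hij : i ≠ j := by
      intro h; subst h; linarith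
    set δ : ℝ := min (a i - b i) (b j - a j) with hδdef
    have hδpos : 0 < δ := lt_min (by linarith) (by linarith)
    have hδi : δ ≤ a i - b i := min_le_left _ _
    have hδj : δ ≤ b j - a j := min_le_right _ _
    -- key structural lemmas
    have E1 : ∀ k, T.anc (ℓ i) k → ¬ T.anc (ℓ j) k → ∀ l, T.anc (ℓ l) k → b l ≤ a l := by
      intro k hk hkj l hl
      by_contra h
      push_neg at h
      have hkV : k ∈ V := by
        simp only [hV, Finset.mem_filter, Finset.mem_univ, true_and]
        exact ⟨⟨i, hk, hi⟩, ⟨l, hl, h⟩⟩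
      have hdk : T.depth k ≤ T.depth v := hvmax k hkV
      have hvk : T.anc v k := T.anc_of_depth_le hk hanci hdk
      exact hkj (T.anc_trans hancj hvk)
    have E2 : ∀ k, T.anc (ℓ j) k → ¬ T.anc (ℓ i) k → ∀ l, T.anc (ℓ l) k → a l ≤ b l := by
      intro k hk hki l hl
      by_contra h
      push_neg at h
      have hkV : k ∈ V := by
        simp only [hV, Finset.mem_filter, Finset.mem_univ, true_and]
        exact ⟨⟨l, hl, h⟩, ⟨j, hk, hj⟩⟩
      have hdk : T.depth k ≤ T.depth v := hvmax k hkV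
      have hvk : T.anc v k := T.anc_of_depth_le hk hancj hdk
      exact hki (T.anc_trans hanci hvk)
    -- mass bounds on the path edges
    have M1 : ∀ k, T.anc (ℓ i) k → ¬ T.anc (ℓ j) k →
        δ ≤ T.mass ℓ a k - T.mass ℓ b k := by
      intro k hk hkj
      have hrw : T.mass ℓ a k - T.mass ℓ b k
          = ∑ l, (if T.anc (ℓ l) k then a l - b l else 0) := by
        unfold WTree.mass
        rw [← Finset.sum_sub_distrib]
        apply Finset.sum_congr rfl
        intro l _
        split <;> simp
      rw [hrw]
      have hterm : δ ≤ (if T.anc (ℓ i) k then a i - b i else 0) := by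
        rw [if_pos hk]; exact hδi
      refine le_trans hterm (Finset.single_le_sum
        (f := fun l => if T.anc (ℓ l) k then a l - b l else 0) ?_ (Finset.mem_univ i))
      intro l _
      split
      · next hl => linarith [E1 k hk hkj l hl]
      · exact le_rfl
    have M2 : ∀ k, T.anc (ℓ j) k → ¬ T.anc (ℓ i) k →
        δ ≤ T.mass ℓ b k - T.mass ℓ a k := by
      intro k hk hki
      have hrw : T.mass ℓ b k - T.mass ℓ a k
          = ∑ l, (if T.anc (ℓ l) k then b l - a l else 0) := by
        unfold WTree.mass
        rw [← Finset.sum_sub_distrib]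
        apply Finset.sum_congr rfl
        intro l _
        split <;> simp
      rw [hrw]
      have hterm : δ ≤ (if T.anc (ℓ j) k then b j - a j else 0) := by
        rw [if_pos hk]; exact hδj
      refine le_trans hterm (Finset.single_le_sum
        (f := fun l => if T.anc (ℓ l) k then b l - a l else 0) ?_ (Finset.mem_univ j))
      intro l _
      split
      · next hl => linarith [E2 k hk hki l hl]
      · exact le_rfl
    -- updated vectors
    set a' : Fin L → ℝ := Function.update a i (a i - δ) with ha'
    set b' : Fin L → ℝ := Function.update b j (b j - δ) with hb'
    have hha' : ∀ l, 0 ≤ a' l := by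
      intro l
      by_cases hl : l = i
      · rw [hl, ha', Function.update_self]; linarith [hhb i]
      · rw [ha', Function.update_of_ne hl]; exact hha l
    have hhb' : ∀ l, 0 ≤ b' l := by
      intro l
      by_cases hl : l = j
      · rw [hl, hb', Function.update_self]; linarith [hha j]
      · rw [hb', Function.update_of_ne hl]; exact hhb l
    have hsuma' : ∑ l, a' l = (∑ l, a l) - δ := by
      rw [ha', Finset.sum_update_of_mem (Finset.mem_univ i)]
      rw [Finset.sum_eq_sum_sdiff_singleton_add (Finset.mem_univ i) a]
      ring
    have hsumb' : ∑ l, b' l = (∑ l, b l) - δ := by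
      rw [hb', Finset.sum_update_of_mem (Finset.mem_univ j)]
      rw [Finset.sum_eq_sum_sdiff_singleton_add (Finset.mem_univ j) b]
      ring
    have hsum' : ∑ l, a' l = ∑ l, b' l := by rw [hsuma', hsumb', hsum]
    -- mass of updated vectors
    have hma : ∀ k, T.mass ℓ a' k = T.mass ℓ a k - (if T.anc (ℓ i) k then δ else 0) := by
      intro k
      unfold WTree.mass
      have hterm : ∀ l : Fin L, (if T.anc (ℓ l) k then a' l else 0)
          = (if T.anc (ℓ l) k then a l else 0)
            - (if l = i then (if T.anc (ℓ i) k then δ else 0) else 0) := by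
        intro l
        by_cases hl : l = i
        · subst hl
          rw [ha', Function.update_self, if_pos rfl]
          split <;> simp
        · rw [ha', Function.update_of_ne hl, if_neg hl]
          ring
      rw [Finset.sum_congr rfl (fun l _ => hterm l), Finset.sum_sub_distrib]
      congr 1
      rw [Finset.sum_ite_eq' Finset.univ i (fun _ => if T.anc (ℓ i) k then δ else 0)]
      simp
    have hmb : ∀ k, T.mass ℓ b' k = T.mass ℓ b k - (if T.anc (ℓ j) k then δ else 0) := by
      intro k
      unfold WTree.mass
      have hterm : ∀ l : Fin L, (if T.anc (ℓ l) k then b' l else 0)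
          = (if T.anc (ℓ l) k then b l else 0)
            - (if l = j then (if T.anc (ℓ j) k then δ else 0) else 0) := by
        intro l
        by_cases hl : l = j
        · subst hl
          rw [hb', Function.update_self, if_pos rfl]
          split <;> simp
        · rw [hb', Function.update_of_ne hl, if_neg hl]
          ring
      rw [Finset.sum_congr rfl (fun l _ => hterm l), Finset.sum_sub_distrib]
      congr 1
      rw [Finset.sum_ite_eq' Finset.univ j (fun _ => if T.anc (ℓ j) k then δ else 0)]
      simp
    -- the closed form drops by exactly δ · d(ℓ i, ℓ j)
    have hCF : ∑ k, T.w k * |T.mass ℓ a' k - T.mass ℓ b' k|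
        = (∑ k, T.w k * |T.mass ℓ a k - T.mass ℓ b k|) - δ * T.dist (ℓ i) (ℓ j) := by
      unfold WTree.dist
      rw [Finset.mul_sum, ← Finset.sum_sub_distrib]
      apply Finset.sum_congr rfl
      intro k _
      rw [hma k, hmb k]
      by_cases h1 : T.anc (ℓ i) k <;> by_cases h2 : T.anc (ℓ j) k
      · rw [if_pos h1, if_pos h2, if_neg (by tauto)]
        rw [show T.mass ℓ a k - δ - (T.mass ℓ b k - δ) = T.mass ℓ a k - T.mass ℓ b k
          from by ring]
        ring
      · rw [if_pos h1, if_neg h2, if_pos (Or.inl ⟨h1, h2⟩)]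
        have hM := M1 k h1 h2
        rw [show T.mass ℓ a k - δ - (T.mass ℓ b k - 0)
            = (T.mass ℓ a k - T.mass ℓ b k) - δ from by ring]
        rw [abs_of_nonneg (by linarith), abs_of_nonneg (by linarith)]
        ring
      · rw [if_neg h1, if_pos h2, if_pos (Or.inr ⟨h2, h1⟩)]
        have hM := M2 k h2 h1
        rw [show T.mass ℓ a k - 0 - (T.mass ℓ b k - δ)
            = -((T.mass ℓ b k - T.mass ℓ a k) - δ) from by ring]
        rw [abs_neg, abs_of_nonneg (by linarith)]
        rw [show T.mass ℓ a k - T.mass ℓ b k = -(T.mass ℓ b k - T.mass ℓ a k) from by ring]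
        rw [abs_neg, abs_of_nonneg (by linarith)]
        ring
      · rw [if_neg h1, if_neg h2, if_neg (by tauto)]
        ring
    -- the number of discrepancies drops
    have hcard' : (Finset.univ.filter fun l => a' l ≠ b' l).card ≤ n := by
      have hmemi : i ∈ Finset.univ.filter fun l => a l ≠ b l := by
        simp only [Finset.mem_filter, Finset.mem_univ, true_and]
        exact fun h => by linarith
      have hmemj : j ∈ Finset.univ.filter fun l => a l ≠ b l := by
        simp only [Finset.mem_filter, Finset.mem_univ, true_and]
        exact fun h => by linarith
      rcases le_total (a i - b i) (b j - a j) with hmin | hmin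
      · -- δ = a i - b i, index i drops out
        have hδeq : δ = a i - b i := min_eq_left hmin
        have hai : a' i = b' i := by
          rw [ha', Function.update_self, hb', Function.update_of_ne hij, hδeq]
          ring
        have hsub : (Finset.univ.filter fun l => a' l ≠ b' l)
            ⊆ (Finset.univ.filter fun l => a l ≠ b l).erase i := by
          intro l hl
          simp only [Finset.mem_filter, Finset.mem_univ, true_and] at hl
          rw [Finset.mem_erase]
          have hli : l ≠ i := by rintro rfl; exact hl hai
          refine ⟨hli, ?_⟩
          simp only [Finset.mem_filter, Finset.mem_univ, true_and]
          by_cases hlj : l = j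
          · subst hlj; exact fun h => by linarith
          · rw [ha', Function.update_of_ne hli, hb', Function.update_of_ne hlj] at hl
            exact hl
        have h1 := Finset.card_le_card hsub
        rw [Finset.card_erase_of_mem hmemi] at h1
        omega
      · -- δ = b j - a j, index j drops out
        have hδeq : δ = b j - a j := min_eq_right hmin
        have haj : a' j = b' j := by
          rw [ha', Function.update_of_ne (Ne.symm hij), hb',
            Function.update_self, hδeq]
          ring
        have hsub : (Finset.univ.filter fun l => a' l ≠ b' l)
            ⊆ (Finset.univ.filter fun l => a l ≠ b l).erase j := by
          intro l hl
          simp only [Finset.mem_filter, Finset.mem_univ, true_and] at hl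
          rw [Finset.mem_erase]
          have hlj : l ≠ j := by rintro rfl; exact hl haj
          refine ⟨hlj, ?_⟩
          simp only [Finset.mem_filter, Finset.mem_univ, true_and]
          by_cases hli : l = i
          · subst hli; exact fun h => by linarith
          · rw [ha', Function.update_of_ne hli, hb', Function.update_of_ne hlj] at hl
            exact hl
        have h1 := Finset.card_le_card hsub
        rw [Finset.card_erase_of_mem hmemj] at h1
        omega
    obtain ⟨π', ⟨hp'pos, hp'row, hp'col⟩, hπ'cost⟩ := ih a' b' hha' hhb' hsum' hcard'
    refine ⟨fun p q => π' p q + if p = i ∧ q = j then δ else 0, ⟨?_, ?_, ?_⟩, ?_⟩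
    · intro p q
      have := hp'pos p q
      dsimp only
      split <;> linarith
    · intro p
      rw [Finset.sum_add_distrib, hp'row p]
      by_cases hp : p = i
      · rw [hp]
        rw [show (∑ q, if i = i ∧ q = j then δ else 0) = δ from by
          simp [Finset.sum_ite_eq']]
        rw [ha', Function.update_self]
        ring
      · rw [show (∑ q, if p = i ∧ q = j then δ else 0) = 0 from by
          simp [hp]]
        rw [ha', Function.update_of_ne hp]
        ring
    · intro q
      rw [Finset.sum_add_distrib, hp'col q]
      by_cases hq : q = j
      · rw [hq]
        rw [show (∑ p, if p = i ∧ j = j then δ else 0) = δ from by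
          simp [Finset.sum_ite_eq']]
        rw [hb', Function.update_self]
        ring
      · rw [show (∑ p, if p = i ∧ q = j then δ else 0) = 0 from by
          simp [hq]]
        rw [hb', Function.update_of_ne hq]
        ring
    · -- cost bound
      have hterm : ∀ p q : Fin L,
          (π' p q + if p = i ∧ q = j then δ else 0) * T.dist (ℓ p) (ℓ q)
          = π' p q * T.dist (ℓ p) (ℓ q)
            + (if p = i ∧ q = j then δ * T.dist (ℓ i) (ℓ j) else 0) := by
        intro p q
        by_cases h : p = i ∧ q = j
        · obtain ⟨rfl, rfl⟩ := h
          rw [if_pos ⟨rfl, rfl⟩, if_pos ⟨rfl, rfl⟩]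
          ring
        · rw [if_neg h, if_neg h]
          ring
      have hcost : otCost (fun p q => π' p q + if p = i ∧ q = j then δ else 0)
          (fun p q => T.dist (ℓ p) (ℓ q))
          = otCost π' (fun p q => T.dist (ℓ p) (ℓ q)) + δ * T.dist (ℓ i) (ℓ j) := by
        unfold otCost
        simp only
        calc ∑ p, ∑ q, (π' p q + if p = i ∧ q = j then δ else 0) * T.dist (ℓ p) (ℓ q)
            = ∑ p, ∑ q, (π' p q * T.dist (ℓ p) (ℓ q)
                + (if p = i ∧ q = j then δ * T.dist (ℓ i) (ℓ j) else 0)) := by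
              exact Finset.sum_congr rfl fun p _ =>
                Finset.sum_congr rfl fun q _ => hterm p q
          _ = (∑ p, ∑ q, π' p q * T.dist (ℓ p) (ℓ q))
                + ∑ p, ∑ q, (if p = i ∧ q = j then δ * T.dist (ℓ i) (ℓ j) else 0) := by
              rw [← Finset.sum_add_distrib]
              exact Finset.sum_congr rfl fun p _ => Finset.sum_add_distrib
          _ = (∑ p, ∑ q, π' p q * T.dist (ℓ p) (ℓ q)) + δ * T.dist (ℓ i) (ℓ j) := by
              congr 1
              have hinner : ∀ p : Fin L,
                  (∑ q, if p = i ∧ q = j then δ * T.dist (ℓ i) (ℓ j) else 0)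
                  = if p = i then δ * T.dist (ℓ i) (ℓ j) else 0 := by
                intro p
                by_cases hp : p = i
                · subst hp
                  simp [Finset.sum_ite_eq']
                · simp [hp]
              rw [Finset.sum_congr rfl fun p _ => hinner p]
              simp [Finset.sum_ite_eq']
      rw [hcost, hCF] at *
      linarith


/-- Proposition 2: the closed-form quantity Σ_e w_e |μ(Γ(v_e)) − ν(Γ(v_e))| equals
the optimal transport cost with the tree shortest-path metric as ground cost. -/
theorem stmt5 {N L : ℕ} (T : WTree N) (ℓ : Fin L → Fin N)
    (hinj : Function.Injective ℓ) (hleaf : ∀ i, T.IsLeaf (ℓ i))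
    (a b : Fin L → ℝ) (ha : IsProbVec a) (hb : IsProbVec b) :
    ∑ k, T.w k * |T.mass ℓ a k - T.mass ℓ b k|
      = sInf {c : ℝ | ∃ π, IsCoupling π a b ∧ c = otCost π (fun i j => T.dist (ℓ i) (ℓ j))} := by
  obtain ⟨hav, has⟩ := ha
  obtain ⟨hbv, hbs⟩ := hb
  obtain ⟨π, hπ, hπcost⟩ := exists_good_coupling T ℓ L a b hav hbv
    (by rw [has, hbs]) ((Finset.card_filter_le _ _).trans (by simp))
  have hmem : otCost π (fun i j => T.dist (ℓ i) (ℓ j)) ∈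
      {c : ℝ | ∃ π, IsCoupling π a b ∧ c = otCost π (fun i j => T.dist (ℓ i) (ℓ j))} :=
    ⟨π, hπ, rfl⟩
  have hlb : ∀ c ∈ {c : ℝ | ∃ π, IsCoupling π a b ∧
      c = otCost π (fun i j => T.dist (ℓ i) (ℓ j))},
      (∑ k, T.w k * |T.mass ℓ a k - T.mass ℓ b k|) ≤ c := by
    rintro c ⟨π', hπ', rfl⟩
    exact cost_lower T ℓ a b π' hπ'
  apply le_antisymm
  · exact le_csInf ⟨_, hmem⟩ hlb
  · exact csInf_le_of_le ⟨_, hlb⟩ hmem hπcost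
end

section
/- Let Π be a coupling whose support, viewed as a bipartite-style undirected graph on the index set with an edge between p and q whenever π_{pq} > 0, contains a cycle i₁, i₂, …, i_{2n}, i_{2n+1} = i₁ with π_{i₁ i₂} > 0, π_{i₃ i₂} > 0, π_{i₃ i₄} > 0, …, π_{i₁ i_{2n}} > 0. Then there exists a coupling Π' with the same marginals, transport cost (with respect to any cost function) at most that of Π or at most that of Π (one of the two cyclic shift directions achieves this), and strictly fewer nonzero entries. -/
/-- Cycle cancelling: if the support of a coupling contains a cycle
(r 0, c 0), (r 1, c 0), (r 1, c 1), …, (r 0, c (n-1)) of positive entries, then there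
is a coupling with the same marginals, no larger cost, and strictly fewer nonzero
entries. -/
theorem stmt8 {nr nc : ℕ} (a : Fin nr → ℝ) (b : Fin nc → ℝ)
    (π : Fin nr → Fin nc → ℝ) (hπ : IsCoupling π a b)
    (C : Fin nr → Fin nc → ℝ)
    {n : ℕ} (r : Fin (n + 2) → Fin nr) (c : Fin (n + 2) → Fin nc)
    (hr : Function.Injective r) (hc : Function.Injective c)
    (h1 : ∀ k, 0 < π (r k) (c k)) (h2 : ∀ k, 0 < π (r (k + 1)) (c k)) :
    ∃ π' : Fin nr → Fin nc → ℝ,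
      IsCoupling π' a b ∧
      otCost π' C ≤ otCost π C ∧
      (Finset.univ.filter (fun pq : Fin nr × Fin nc => π' pq.1 pq.2 ≠ 0)).card
        < (Finset.univ.filter (fun pq : Fin nr × Fin nc => π pq.1 pq.2 ≠ 0)).card := by
  classical
  obtain ⟨hpos, hrow, hcol⟩ := hπ
  have hone : (1 : Fin (n+2)) ≠ 0 := by simp [Fin.ext_iff]
  have hk1 : ∀ k : Fin (n+2), k + 1 ≠ k := by
    intro k h
    apply hone
    have h' : k + 1 = k + 0 := by simp [h]
    exact add_left_cancel h'
  have hrne : ∀ k : Fin (n+2), r (k + 1) ≠ r k := fun k h => hk1 k (hr h)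
  set D := ∑ k : Fin (n+2), (C (r k) (c k) - C (r (k+1)) (c k)) with hDdef
  have hne : (Finset.univ : Finset (Fin (n+2))).Nonempty := Finset.univ_nonempty
  obtain ⟨k₁, -, hk₁⟩ := Finset.exists_mem_eq_inf' hne (fun k => π (r k) (c k))
  obtain ⟨k₂, -, hk₂⟩ := Finset.exists_mem_eq_inf' hne (fun k => π (r (k + 1)) (c k))
  set ε₁ := Finset.univ.inf' hne (fun k => π (r k) (c k)) with hε₁
  set ε₂ := Finset.univ.inf' hne (fun k => π (r (k + 1)) (c k)) with hε₂
  have hε₁pos : 0 < ε₁ := (Finset.lt_inf'_iff hne).2 (fun k _ => h1 k)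
  have hε₂pos : 0 < ε₂ := (Finset.lt_inf'_iff hne).2 (fun k _ => h2 k)
  have hε₁le : ∀ k, ε₁ ≤ π (r k) (c k) := fun k => Finset.inf'_le _ (Finset.mem_univ k)
  have hε₂le : ∀ k, ε₂ ≤ π (r (k + 1)) (c k) := fun k => Finset.inf'_le _ (Finset.mem_univ k)
  set t : ℝ := if D ≤ 0 then ε₂ else -ε₁ with htdef
  have ht1 : -ε₁ ≤ t := by
    rw [htdef]; split
    · linarith
    · linarith
  have ht2 : t ≤ ε₂ := by
    rw [htdef]; split
    · linarith
    · linarith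
  have htD : t * D ≤ 0 := by
    rw [htdef]; split
    · rename_i h; exact mul_nonpos_iff.2 (Or.inl ⟨hε₂pos.le, h⟩)
    · rename_i h
      have : 0 ≤ ε₁ * D := mul_nonneg hε₁pos.le (le_of_lt (not_le.1 h))
      nlinarith
  -- pointwise sum helpers
  have rowpt : ∀ (x : ℝ) (i i0 : Fin nr) (j0 : Fin nc),
      ∑ j, (if i = i0 ∧ j = j0 then x else 0) = if i = i0 then x else 0 := by
    intro x i i0 j0
    by_cases h : i = i0 <;> simp [h]
  have colpt : ∀ (x : ℝ) (j : Fin nc) (i0 : Fin nr) (j0 : Fin nc),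
      ∑ i, (if i = i0 ∧ j = j0 then x else 0) = if j = j0 then x else 0 := by
    intro x j i0 j0
    by_cases h : j = j0 <;> simp [h]
  have point : ∀ (f : Fin nr → Fin nc → ℝ) (i0 : Fin nr) (j0 : Fin nc),
      ∑ i, ∑ j, (if i = i0 ∧ j = j0 then f i j else 0) = f i0 j0 := by
    intro f i0 j0
    rw [Finset.sum_eq_single_of_mem i0 (Finset.mem_univ _)]
    · rw [Finset.sum_eq_single_of_mem j0 (Finset.mem_univ _)]
      · simp
      · intro j _ hj; simp [hj]
    · intro i _ hi
      exact Finset.sum_eq_zero (fun j _ => by simp [hi])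
  set F : Fin nr → Fin nc → ℝ := fun i j =>
    ∑ k : Fin (n+2), ((if i = r k ∧ j = c k then (1:ℝ) else 0)
      - (if i = r (k+1) ∧ j = c k then (1:ℝ) else 0)) with hFdef
  have FB : ∀ (k₀ : Fin (n+2)) i, F i (c k₀)
      = (if i = r k₀ then (1:ℝ) else 0) - (if i = r (k₀+1) then (1:ℝ) else 0) := by
    intro k₀ i
    simp only [hFdef]
    rw [Finset.sum_eq_single_of_mem k₀ (Finset.mem_univ _)]
    · simp
    · intro k _ hk
      have hck : c k₀ ≠ c k := fun h => hk (hc h.symm)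
      simp [hck]
  have FA : ∀ i j, (∀ k, j ≠ c k) → F i j = 0 := by
    intro i j hj
    simp only [hFdef]
    exact Finset.sum_eq_zero (fun k _ => by simp [hj k])
  have Fval : ∀ i j, F i j = 0
      ∨ (∃ k, i = r k ∧ j = c k ∧ F i j = 1)
      ∨ (∃ k, i = r (k+1) ∧ j = c k ∧ F i j = -1) := by
    intro i j
    by_cases hj : ∃ k, j = c k
    · obtain ⟨k₀, rfl⟩ := hj
      by_cases hi1 : i = r k₀
      · refine Or.inr (Or.inl ⟨k₀, hi1, rfl, ?_⟩)
        have h3 : r k₀ ≠ r (k₀ + 1) := fun h => hrne k₀ h.symm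
        rw [FB]; simp [hi1, h3]
      · by_cases hi2 : i = r (k₀ + 1)
        · refine Or.inr (Or.inr ⟨k₀, hi2, rfl, ?_⟩)
          rw [FB]; simp [hi1, hi2, hrne k₀]
        · left; rw [FB]; simp [hi1, hi2]
    · push_neg at hj
      exact Or.inl (FA i j hj)
  have Ffwd : ∀ k, F (r k) (c k) = 1 := by
    intro k
    have h3 : r k ≠ r (k + 1) := fun h => hrne k h.symm
    rw [FB]; simp [h3]
  have Fbwd : ∀ k, F (r (k+1)) (c k) = -1 := by
    intro k
    rw [FB]; simp [hrne k]
  have Fsupp : ∀ i j, π i j = 0 → F i j = 0 := by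
    intro i j hπ0
    rcases Fval i j with h | ⟨k, hi, hj, -⟩ | ⟨k, hi, hj, -⟩
    · exact h
    · exfalso; rw [hi, hj] at hπ0; exact (h1 k).ne' hπ0
    · exfalso; rw [hi, hj] at hπ0; exact (h2 k).ne' hπ0
  have Frow : ∀ i, ∑ j, F i j = 0 := by
    intro i
    simp only [hFdef]
    rw [Finset.sum_comm]
    have e : ∀ k : Fin (n+2),
        ∑ j, ((if i = r k ∧ j = c k then (1:ℝ) else 0)
          - (if i = r (k+1) ∧ j = c k then (1:ℝ) else 0))
        = (if i = r k then (1:ℝ) else 0) - (if i = r (k+1) then (1:ℝ) else 0) := by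
      intro k
      rw [Finset.sum_sub_distrib, rowpt, rowpt]
    rw [Finset.sum_congr rfl (fun k _ => e k), Finset.sum_sub_distrib, sub_eq_zero]
    exact Fintype.sum_equiv (Equiv.subRight (1 : Fin (n+2)))
      (fun k => if i = r k then (1:ℝ) else 0)
      (fun k => if i = r (k+1) then (1:ℝ) else 0) (fun k => by simp)
  have Fcol : ∀ j, ∑ i, F i j = 0 := by
    intro j
    simp only [hFdef]
    rw [Finset.sum_comm]
    refine Finset.sum_eq_zero (fun k _ => ?_)
    rw [Finset.sum_sub_distrib, colpt, colpt, sub_self]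
  set π' : Fin nr → Fin nc → ℝ := fun i j => π i j + t * F i j with hπ'def
  have hπ'pos : ∀ i j, 0 ≤ π' i j := by
    intro i j
    simp only [hπ'def]
    rcases Fval i j with h | ⟨k, hi, hj, h⟩ | ⟨k, hi, hj, h⟩
    · rw [h, mul_zero, add_zero]; exact hpos i j
    · subst hi; subst hj; rw [h, mul_one]
      have := hε₁le k; linarith
    · subst hi; subst hj; rw [h]
      have := hε₂le k; linarith
  have hπ'row : ∀ i, ∑ j, π' i j = a i := by
    intro i
    simp only [hπ'def]
    rw [Finset.sum_add_distrib, hrow, ← Finset.mul_sum, Frow, mul_zero, add_zero]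
  have hπ'col : ∀ j, ∑ i, π' i j = b j := by
    intro j
    simp only [hπ'def]
    rw [Finset.sum_add_distrib, hcol, ← Finset.mul_sum, Fcol, mul_zero, add_zero]
  have key : ∀ k : Fin (n+2),
      ∑ i, ∑ j, ((if i = r k ∧ j = c k then C i j else 0)
        - (if i = r (k+1) ∧ j = c k then C i j else 0))
      = C (r k) (c k) - C (r (k+1)) (c k) := by
    intro k
    simp only [Finset.sum_sub_distrib]
    rw [point, point]
  have hFC : ∑ i, ∑ j, F i j * C i j = D := by
    have e1 : ∀ (i : Fin nr) (j : Fin nc), F i j * C i j = ∑ k : Fin (n+2),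
        ((if i = r k ∧ j = c k then C i j else 0)
          - (if i = r (k+1) ∧ j = c k then C i j else 0)) := by
      intro i j
      simp only [hFdef]
      rw [Finset.sum_mul]
      refine Finset.sum_congr rfl (fun k _ => ?_)
      rw [sub_mul]
      congr 1 <;> split <;> simp
    simp only [e1]
    calc ∑ i, ∑ j, ∑ k : Fin (n+2),
          ((if i = r k ∧ j = c k then C i j else 0)
            - (if i = r (k+1) ∧ j = c k then C i j else 0))
        = ∑ i, ∑ k : Fin (n+2), ∑ j,
          ((if i = r k ∧ j = c k then C i j else 0)
            - (if i = r (k+1) ∧ j = c k then C i j else 0)) :=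
          Finset.sum_congr rfl (fun i _ => Finset.sum_comm)
      _ = ∑ k : Fin (n+2), ∑ i, ∑ j,
          ((if i = r k ∧ j = c k then C i j else 0)
            - (if i = r (k+1) ∧ j = c k then C i j else 0)) := Finset.sum_comm
      _ = D := by rw [hDdef]; exact Finset.sum_congr rfl (fun k _ => key k)
  have hcost : otCost π' C = otCost π C + t * D := by
    rw [otCost, otCost, hπ'def, ← hFC, Finset.mul_sum, ← Finset.sum_add_distrib]
    refine Finset.sum_congr rfl (fun i _ => ?_)
    rw [Finset.mul_sum, ← Finset.sum_add_distrib]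
    refine Finset.sum_congr rfl (fun j _ => ?_)
    ring
  have hsub : (Finset.univ.filter (fun pq : Fin nr × Fin nc => π' pq.1 pq.2 ≠ 0))
      ⊆ (Finset.univ.filter (fun pq : Fin nr × Fin nc => π pq.1 pq.2 ≠ 0)) := by
    intro p hp
    simp only [Finset.mem_filter, Finset.mem_univ, true_and] at hp ⊢
    intro h0
    apply hp
    simp only [hπ'def]
    rw [h0, Fsupp p.1 p.2 h0, mul_zero, add_zero]
  have hzero : ∃ p : Fin nr × Fin nc, π p.1 p.2 ≠ 0 ∧ π' p.1 p.2 = 0 := by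
    by_cases hD : D ≤ 0
    · refine ⟨(r (k₂ + 1), c k₂), (h2 k₂).ne', ?_⟩
      simp only [hπ'def]
      rw [Fbwd, htdef, if_pos hD, ← hk₂]
      ring
    · refine ⟨(r k₁, c k₁), (h1 k₁).ne', ?_⟩
      simp only [hπ'def]
      rw [Ffwd, htdef, if_neg hD, ← hk₁]
      ring
  refine ⟨π', ⟨hπ'pos, hπ'row, hπ'col⟩, by rw [hcost]; linarith, ?_⟩
  obtain ⟨p, hp1, hp2⟩ := hzero
  apply Finset.card_lt_card
  refine (Finset.ssubset_iff_of_subset hsub).2 ⟨p, ?_, ?_⟩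
  · simp [hp1]
  · simp [hp2]
end
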